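/- Let q ≥ 1 and let S_1, …, S_m be 3-element subsets of {1,…,3q}, with S_i = {x_{i,1}, x_{i,2}, x_{i,3}}. Let T be the tree with root r and, for each i ∈ {1,…,m}, two paths attached to r: the path r — a_i¹ — e_{i,1} — e_{i,2} — e_{i,3} — b_i¹ and the path r — a_i² — b_i². Color the vertices by c(a_i¹) = c(a_i²) = i, c(b_i¹) = c(b_i²) = m + i, c(e_{i,j}) = 2m + x_{i,j} for j ∈ {1,2,3}, and c(r) = 2m + 3q + 1, and let M be the multiset containing each color of {1, …, 2m + 3q + 1} exactly once. Then (T, c, M) has a motif solution if and only if there exists 𝒯 ⊆ {1,…,m} such that every element of {1,…,3q} belongs to exactly one set S_i with i ∈ 𝒯 (an exact cover by 3-sets). -/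

import Mathlib

/-- A motif solution of an instance `(G, c, M)`: a set `R` of vertices such that the
induced subgraph `G[R]` is connected and the multiset of colors of `R` equals `M`. -/
def IsMotifSolution {V C : Type*} (G : SimpleGraph V) (c : V → C) (M : Multiset C)
    (R : Finset V) : Prop :=
  (G.induce (R : Set V)).Connected ∧ Multiset.map c R.val = M

/-- The tree of Statement 9 on vertex set `Option (Fin m × Fin 7)`: `none` is the root
`r`, and for each `i`, `some (i,0) = aᵢ¹`, `some (i,1), some (i,2), some (i,3)` are
`e_{i,1}, e_{i,2}, e_{i,3}`, `some (i,4) = bᵢ¹`, `some (i,5) = aᵢ²`, `some (i,6) = bᵢ²`.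
Edges: `r—aᵢ¹`, the path `aᵢ¹—e_{i,1}—e_{i,2}—e_{i,3}—bᵢ¹`, and `r—aᵢ²—bᵢ²`. -/
def x3cRel (m : ℕ) (a b : Option (Fin m × Fin 7)) : Prop :=
  (∃ i : Fin m, a = none ∧ (b = some (i, 0) ∨ b = some (i, 5))) ∨
  (∃ (i : Fin m) (j j' : Fin 7), j.val < 4 ∧ j'.val = j.val + 1 ∧
    a = some (i, j) ∧ b = some (i, j')) ∨
  (∃ i : Fin m, a = some (i, 5) ∧ b = some (i, 6))

/-- The coloring of Statement 9: `c(aᵢ¹) = c(aᵢ²) = i`, `c(bᵢ¹) = c(bᵢ²) = m + i`,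
`c(e_{i,j}) = 2m + x_{i,j}`, `c(r) = 2m + 3q + 1` (colors written in `{1, …, 2m+3q+1}`,
indices one-based). -/
def x3cColor (m q : ℕ) (x : Fin m → Fin 3 → Fin (3 * q)) :
    Option (Fin m × Fin 7) → ℕ
  | none => 2 * m + 3 * q + 1
  | some (i, j) =>
    match j.val with
    | 0 => i.val + 1
    | 1 => 2 * m + (x i 0).val + 1
    | 2 => 2 * m + (x i 1).val + 1
    | 3 => 2 * m + (x i 2).val + 1
    | 4 => m + i.val + 1
    | 5 => i.val + 1
    | _ => m + i.val + 1

section X3CAux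

lemma x3c_adj_cases {m : ℕ} {a b : Option (Fin m × Fin 7)}
    (h : (SimpleGraph.fromRel (x3cRel m)).Adj a b) :
    (∃ i : Fin m, (a = none ∧ (b = some (i,0) ∨ b = some (i,5))) ∨
        (b = none ∧ (a = some (i,0) ∨ a = some (i,5)))) ∨
    (∃ (i : Fin m) (s t : Fin 7), s.val + 1 = t.val ∧ t.val ≤ 4 ∧
      ((a = some (i,s) ∧ b = some (i,t)) ∨ (a = some (i,t) ∧ b = some (i,s)))) ∨
    (∃ i : Fin m, (a = some (i,5) ∧ b = some (i,6)) ∨ (a = some (i,6) ∧ b = some (i,5))) := by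
  rw [SimpleGraph.fromRel_adj] at h
  obtain ⟨-, h | h⟩ := h
  · rcases h with ⟨i, h1, h2⟩ | ⟨i, j, j', hj, hj', h1, h2⟩ | ⟨i, h1, h2⟩
    · exact Or.inl ⟨i, Or.inl ⟨h1, h2⟩⟩
    · exact Or.inr (Or.inl ⟨i, j, j', by omega, by omega, Or.inl ⟨h1, h2⟩⟩)
    · exact Or.inr (Or.inr ⟨i, Or.inl ⟨h1, h2⟩⟩)
  · rcases h with ⟨i, h1, h2⟩ | ⟨i, j, j', hj, hj', h1, h2⟩ | ⟨i, h1, h2⟩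
    · exact Or.inl ⟨i, Or.inr ⟨h1, h2⟩⟩
    · exact Or.inr (Or.inl ⟨i, j, j', by omega, by omega, Or.inr ⟨h2, h1⟩⟩)
    · exact Or.inr (Or.inr ⟨i, Or.inr ⟨h2, h1⟩⟩)

lemma x3c_walk_ind {m : ℕ} {R : Finset (Option (Fin m × Fin 7))} (P : Option (Fin m × Fin 7) → Prop)
    (hP : ∀ a b : Option (Fin m × Fin 7), a ∈ R → b ∈ R →
      (SimpleGraph.fromRel (x3cRel m)).Adj a b → P a → P b) :
    ∀ {u v : ((R : Set (Option (Fin m × Fin 7))))},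
      ((SimpleGraph.fromRel (x3cRel m)).induce (R : Set _)).Walk u v → P u.val → P v.val := by
  intro u v w
  induction w with
  | nil => exact id
  | cons h _ ih =>
    intro hu
    exact ih (hP _ _ (Finset.mem_coe.mp (Subtype.mem _)) (Finset.mem_coe.mp (Subtype.mem _)) h hu)

lemma x3c_adj_root0 {m : ℕ} (i : Fin m) :
    (SimpleGraph.fromRel (x3cRel m)).Adj none (some (i, 0)) := by
  rw [SimpleGraph.fromRel_adj]
  exact ⟨by simp, Or.inl (Or.inl ⟨i, rfl, Or.inl rfl⟩)⟩

lemma x3c_adj_root5 {m : ℕ} (i : Fin m) :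
    (SimpleGraph.fromRel (x3cRel m)).Adj none (some (i, 5)) := by
  rw [SimpleGraph.fromRel_adj]
  exact ⟨by simp, Or.inl (Or.inl ⟨i, rfl, Or.inr rfl⟩)⟩

lemma x3c_adj_56 {m : ℕ} (i : Fin m) :
    (SimpleGraph.fromRel (x3cRel m)).Adj (some (i, 5)) (some (i, 6)) := by
  rw [SimpleGraph.fromRel_adj]
  refine ⟨by simp [Fin.ext_iff], Or.inl (Or.inr (Or.inr ⟨i, rfl, rfl⟩))⟩

lemma x3c_adj_path {m : ℕ} (i : Fin m) (k : ℕ) (hk : k < 4) :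
    (SimpleGraph.fromRel (x3cRel m)).Adj (some (i, ⟨k, by omega⟩)) (some (i, ⟨k+1, by omega⟩)) := by
  rw [SimpleGraph.fromRel_adj]
  refine ⟨by simp [Fin.ext_iff], Or.inl (Or.inr (Or.inl ⟨i, ⟨k, by omega⟩, ⟨k+1, by omega⟩, hk, rfl, rfl, rfl⟩))⟩

lemma induce_reach {V : Type*} {G : SimpleGraph V} {R : Finset V} {a b : V} (ha : a ∈ R)
    (hb : b ∈ R) (h : G.Adj a b) : (G.induce (R : Set V)).Reachable ⟨a, ha⟩ ⟨b, hb⟩ :=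
  SimpleGraph.Adj.reachable h

lemma x3c_color_e {m q : ℕ} (x : Fin m → Fin 3 → Fin (3 * q)) (i : Fin m) (j : Fin 3) :
    x3cColor m q x (some (i, ⟨j.val+1, by omega⟩)) = 2*m + (x i j).val + 1 := by
  fin_cases j <;> rfl

lemma x3c_color_cases {m q : ℕ} (x : Fin m → Fin 3 → Fin (3 * q))
    (v : Option (Fin m × Fin 7)) :
    (v = none ∧ x3cColor m q x v = 2*m+3*q+1) ∨
    ∃ i : Fin m,
      ((v = some (i,0) ∨ v = some (i,5)) ∧ x3cColor m q x v = i.val+1) ∨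
      ((v = some (i,4) ∨ v = some (i,6)) ∧ x3cColor m q x v = m+i.val+1) ∨
      (∃ j : Fin 3, v = some (i, ⟨j.val+1, by omega⟩) ∧
        x3cColor m q x v = 2*m+(x i j).val+1) := by
  match v with
  | none => exact Or.inl ⟨rfl, rfl⟩
  | some (i, j) =>
    refine Or.inr ⟨i, ?_⟩
    fin_cases j
    · exact Or.inl ⟨Or.inl rfl, rfl⟩
    · exact Or.inr (Or.inr ⟨0, rfl, rfl⟩)
    · exact Or.inr (Or.inr ⟨1, rfl, rfl⟩)
    · exact Or.inr (Or.inr ⟨2, rfl, rfl⟩)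
    · exact Or.inr (Or.inl ⟨Or.inl rfl, rfl⟩)
    · exact Or.inl ⟨Or.inr rfl, rfl⟩
    · exact Or.inr (Or.inl ⟨Or.inr rfl, rfl⟩)

lemma x3c_color_le {m q : ℕ} (x : Fin m → Fin 3 → Fin (3 * q)) (i : Fin m) (j : Fin 7) :
    x3cColor m q x (some (i, j)) ≤ 2*m+3*q := by
  rcases x3c_color_cases x (some (i,j)) with ⟨h, -⟩ | ⟨i', h | h | ⟨j', -, h⟩⟩
  · simp at h
  · have := i'.isLt; omega
  · have := i'.isLt; omega
  · have := (x i' j').isLt; omega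

end X3CAux

/-- With `M` containing each color of `{1, …, 2m+3q+1}` exactly once,
the instance `(T, c, M)` has a motif solution iff the sets `S_i = {x_{i,1}, x_{i,2},
x_{i,3}}` admit an exact cover by 3-sets of `{1, …, 3q}`. -/
theorem stmt_9 (q m : ℕ) (hq : 1 ≤ q) (x : Fin m → Fin 3 → Fin (3 * q))
    (hx : ∀ i : Fin m, Function.Injective (x i)) :
    (∃ R : Finset (Option (Fin m × Fin 7)),
      IsMotifSolution (SimpleGraph.fromRel (x3cRel m)) (x3cColor m q x)
        ((Multiset.range (2 * m + 3 * q + 1)).map (· + 1)) R) ↔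
    ∃ T : Finset (Fin m), ∀ w : Fin (3 * q),
      ∃! i : Fin m, i ∈ T ∧ ∃ j : Fin 3, x i j = w := by
  classical
  constructor
  · rintro ⟨R, hconn, hM⟩
    have hnodup : (Multiset.map (x3cColor m q x) R.val).Nodup := by
      rw [hM]
      exact (Multiset.nodup_range _).map (fun a b h => by omega)
    have hinj : ∀ a ∈ R, ∀ b ∈ R, x3cColor m q x a = x3cColor m q x b → a = b :=
      fun a ha b hb => Multiset.inj_on_of_nodup_map hnodup a ha b hb
    have hcol : ∀ k, k < 2*m+3*q+1 → ∃ v ∈ R, x3cColor m q x v = k + 1 := by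
      intro k hk
      have h1 : (k+1) ∈ Multiset.map (x3cColor m q x) R.val := by
        rw [hM]
        simp only [Multiset.mem_map, Multiset.mem_range]
        exact ⟨k, by omega, rfl⟩
      simpa using h1
    have hnone : none ∈ R := by
      obtain ⟨v, hv, hcv⟩ := hcol (2*m+3*q) (by omega)
      match v with
      | none => exact hv
      | some (i, j) => exact absurd hcv (by have := x3c_color_le x i j; omega)
    have hreach : ∀ v (hv : v ∈ R),
        ((SimpleGraph.fromRel (x3cRel m)).induce (R : Set _)).Reachable ⟨v, hv⟩ ⟨none, hnone⟩ :=
      fun v hv => hconn.preconnected _ _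
    -- downward closure along the long path
    have down : ∀ (i : Fin m) (t : ℕ) (ht : t < 4),
        some (i, ⟨t+1, by omega⟩) ∈ R → some (i, ⟨t, by omega⟩) ∈ R := by
      intro i t ht hmem
      by_contra hnot
      have key := x3c_walk_ind (R := R)
        (fun v => ∃ s : Fin 7, v = some (i, s) ∧ t + 1 ≤ s.val ∧ s.val ≤ 4)
        ?_ ((hreach _ hmem).some) ⟨⟨t+1, by omega⟩, rfl, show t+1 ≤ t+1 from le_refl _, show t+1 ≤ 4 by omega⟩
      · obtain ⟨s, hs, -⟩ := key; simp at hs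
      · rintro a b ha hb hadj ⟨s, rfl, hs1, hs2⟩
        rcases x3c_adj_cases hadj with
            ⟨i', ⟨h1, -⟩ | ⟨h1, h2 | h2⟩⟩ |
            ⟨i', s', t', hst, ht', ⟨h1, h2⟩ | ⟨h1, h2⟩⟩ | ⟨i', ⟨h1, -⟩ | ⟨h1, -⟩⟩
        · simp at h1
        · simp only [Option.some.injEq, Prod.mk.injEq] at h2
          have h0 : s.val = 0 := by rw [h2.2]; decide
          omega
        · simp only [Option.some.injEq, Prod.mk.injEq] at h2
          have h0 : s.val = 5 := by rw [h2.2]; decide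
          omega
        · simp only [Option.some.injEq, Prod.mk.injEq] at h1
          obtain ⟨rfl, rfl⟩ := h1
          exact ⟨t', h2, by omega, by omega⟩
        · simp only [Option.some.injEq, Prod.mk.injEq] at h1
          obtain ⟨rfl, rfl⟩ := h1
          by_cases hd : s'.val = t
          · exfalso
            apply hnot
            have : s' = (⟨t, by omega⟩ : Fin 7) := Fin.ext hd
            rwa [h2, this] at hb
          · exact ⟨s', h2, by omega, by omega⟩
        · simp only [Option.some.injEq, Prod.mk.injEq] at h1
          have h0 : s.val = 5 := by rw [h1.2]; decide
          omega
        · simp only [Option.some.injEq, Prod.mk.injEq] at h1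
          have h0 : s.val = 6 := by rw [h1.2]; decide
          omega
    -- (i,6) ∈ R → (i,5) ∈ R
    have up6 : ∀ i : Fin m, some (i, 6) ∈ R → some (i, 5) ∈ R := by
      intro i hmem
      by_contra hnot
      have key := x3c_walk_ind (R := R) (fun v => v = some (i, 6))
        ?_ ((hreach _ hmem).some) rfl
      · simp at key
      · rintro a b ha hb hadj rfl
        rcases x3c_adj_cases hadj with
            ⟨i', ⟨h1, -⟩ | ⟨h1, h2 | h2⟩⟩ |
            ⟨i', s', t', hst, ht', ⟨h1, h2⟩ | ⟨h1, h2⟩⟩ | ⟨i', ⟨h1, h2⟩ | ⟨h1, h2⟩⟩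
        · simp at h1
        · simp only [Option.some.injEq, Prod.mk.injEq] at h2
          exact absurd h2.2 (by decide)
        · simp only [Option.some.injEq, Prod.mk.injEq] at h2
          exact absurd h2.2 (by decide)
        · simp only [Option.some.injEq, Prod.mk.injEq] at h1
          have h0 : s'.val = 6 := by rw [← h1.2]; decide
          omega
        · simp only [Option.some.injEq, Prod.mk.injEq] at h1
          have h0 : t'.val = 6 := by rw [← h1.2]; decide
          omega
        · simp only [Option.some.injEq, Prod.mk.injEq] at h1
          exact absurd h1.2 (by decide)
        · exfalso
          apply hnot
          simp only [Option.some.injEq, Prod.mk.injEq] at h1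
          obtain ⟨rfl, -⟩ := h1
          rwa [h2] at hb
    have down0 : ∀ (t : ℕ) (ht : t ≤ 4) (i : Fin m), some (i, ⟨t, by omega⟩) ∈ R →
        some (i, (0 : Fin 7)) ∈ R := by
      intro t
      induction t with
      | zero => intro _ i h; exact h
      | succ n ih => intro ht i h; exact ih (by omega) i (down i n (by omega) h)
    -- if (i,0) ∈ R then the whole long path of i is in R
    have efull : ∀ i : Fin m, some (i, (0:Fin 7)) ∈ R →
        ∀ j : Fin 3, some (i, (⟨j.val+1, by omega⟩ : Fin 7)) ∈ R := by
      intro i hi0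
      have h4 : some (i, (4 : Fin 7)) ∈ R := by
        obtain ⟨v, hv, hcv⟩ := hcol (m + i.val) (by have := i.isLt; omega)
        rcases x3c_color_cases x v with ⟨rfl, h⟩ | ⟨i', ⟨hv', h⟩ | ⟨hv', h⟩ | ⟨j', rfl, h⟩⟩
        · omega
        · exfalso; have := i'.isLt; have := i.isLt; omega
        · have hii : i' = i := by have := i'.isLt; have := i.isLt; exact Fin.ext (by omega)
          rcases hv' with rfl | rfl
          · exact hii ▸ hv
          · -- (i,6) ∈ R leads to contradiction
            exfalso
            have h5 : some (i', 5) ∈ R := up6 i' hv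
            have heq := hinj _ hi0 _ h5 (by show i.val + 1 = i'.val + 1; rw [hii])
            simp only [Option.some.injEq, Prod.mk.injEq] at heq
            exact absurd heq.2 (by decide)
        · exfalso; have := (x i' j').isLt; have := i.isLt; omega
      have h3 : some (i, (⟨3, by omega⟩ : Fin 7)) ∈ R := down i 3 (by omega) h4
      have h2 : some (i, (⟨2, by omega⟩ : Fin 7)) ∈ R := down i 2 (by omega) h3
      have h1 : some (i, (⟨1, by omega⟩ : Fin 7)) ∈ R := down i 1 (by omega) h2
      intro j
      fin_cases j
      · exact h1
      · exact h2
      · exact h3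
    refine ⟨Finset.univ.filter (fun i => some (i, (0:Fin 7)) ∈ R), ?_⟩
    intro w
    obtain ⟨v, hv, hcv⟩ := hcol (2*m + w.val) (by have := w.isLt; omega)
    rcases x3c_color_cases x v with ⟨rfl, h⟩ | ⟨i, ⟨hv', h⟩ | ⟨hv', h⟩ | ⟨j, rfl, h⟩⟩
    · exfalso; have := w.isLt; omega
    · exfalso; have := i.isLt; have := w.isLt; omega
    · exfalso; have := i.isLt; have := w.isLt; omega
    · have hxw : x i j = w := by
        have := (x i j).isLt
        exact Fin.ext (by omega)
    -- i ∈ T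
      have hi0 : some (i, (0:Fin 7)) ∈ R := down0 (j.val+1) (by have := j.isLt; omega) i hv
      refine ⟨i, ⟨Finset.mem_filter.mpr ⟨Finset.mem_univ _, hi0⟩, j, hxw⟩, ?_⟩
      rintro y ⟨hyT, j', hj'⟩
      have hy0 : some (y, (0:Fin 7)) ∈ R := (Finset.mem_filter.mp hyT).2
      have hye : some (y, (⟨j'.val+1, by omega⟩ : Fin 7)) ∈ R := efull y hy0 j'
      have hcy : x3cColor m q x (some (y, (⟨j'.val+1, by omega⟩ : Fin 7))) = 2*m + w.val + 1 := by
        rw [x3c_color_e]; rw [hj']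
      have := hinj _ hye _ hv (by rw [hcy, hcv])
      simp only [Option.some.injEq, Prod.mk.injEq] at this
      exact this.1
  · rintro ⟨T, hT⟩
    set R : Finset (Option (Fin m × Fin 7)) := Finset.univ.filter (fun v => v = none ∨
      ∃ p : Fin m × Fin 7, v = some p ∧ (p.1 ∈ T ↔ p.2.val ≤ 4)) with hR
    have hmemR : ∀ v, v ∈ R ↔ (v = none ∨
        ∃ p : Fin m × Fin 7, v = some p ∧ (p.1 ∈ T ↔ p.2.val ≤ 4)) := by
      intro v; simp [hR]
    have hnone : none ∈ R := (hmemR none).mpr (Or.inl rfl)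
    have hmemS : ∀ (i : Fin m) (j : Fin 7), some (i,j) ∈ R ↔ (i ∈ T ↔ j.val ≤ 4) := by
      intro i j
      rw [hmemR]
      constructor
      · rintro (h | ⟨p, hp, h⟩)
        · simp at h
        · obtain rfl := Option.some.inj hp
          exact h
      · intro h; exact Or.inr ⟨(i,j), rfl, h⟩
    have hT0 : ∀ i : Fin m, some (i, (0:Fin 7)) ∈ R → i ∈ T :=
      fun i h => ((hmemS i 0).mp h).mpr (by decide)
    have hT4 : ∀ i : Fin m, some (i, (4:Fin 7)) ∈ R → i ∈ T :=
      fun i h => ((hmemS i 4).mp h).mpr (by decide)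
    have hT5 : ∀ i : Fin m, some (i, (5:Fin 7)) ∈ R → i ∉ T :=
      fun i h hi => absurd (((hmemS i 5).mp h).mp hi) (by decide)
    have hT6 : ∀ i : Fin m, some (i, (6:Fin 7)) ∈ R → i ∉ T :=
      fun i h hi => absurd (((hmemS i 6).mp h).mp hi) (by decide)
    have hTe : ∀ (i : Fin m) (j : Fin 3),
        some (i, (⟨j.val+1, by omega⟩ : Fin 7)) ∈ R → i ∈ T :=
      fun i j h => ((hmemS i ⟨j.val+1, by omega⟩).mp h).mpr
        (by have := j.isLt; show j.val+1 ≤ 4; omega)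
    refine ⟨R, ?_, ?_⟩
    · -- connectivity
      rw [SimpleGraph.connected_iff]
      refine ⟨?_, ⟨⟨none, hnone⟩⟩⟩
      have key : ∀ v : ((R : Set (Option (Fin m × Fin 7)))),
          ((SimpleGraph.fromRel (x3cRel m)).induce (R : Set _)).Reachable v ⟨none, hnone⟩ := by
        rintro ⟨v, hv⟩
        rcases v with - | ⟨i, j⟩
        · exact SimpleGraph.Reachable.refl _
        · have hj := (hmemS i j).mp (Finset.mem_coe.mp hv)
          by_cases hiT : i ∈ T
          · have hj4 : j.val ≤ 4 := hj.mp hiT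
            have hmem : ∀ (t : ℕ) (ht : t ≤ 4), some (i, (⟨t, by omega⟩:Fin 7)) ∈ R :=
              fun t ht => (hmemS i ⟨t, by omega⟩).mpr (iff_of_true hiT ht)
            have chain : ∀ (t : ℕ) (ht : t ≤ 4),
                ((SimpleGraph.fromRel (x3cRel m)).induce (R : Set _)).Reachable
                  ⟨some (i, ⟨t, by omega⟩), hmem t ht⟩ ⟨none, hnone⟩ := by
              intro t
              induction t with
              | zero => intro ht; exact (induce_reach hnone (hmem 0 ht) (x3c_adj_root0 i)).symm
              | succ n ih =>
                intro ht
                exact (induce_reach (hmem (n+1) ht) (hmem n (by omega))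
                  ((x3c_adj_path i n (by omega)).symm)).trans (ih (by omega))
            exact chain j.val hj4
          · have hj5 : 5 ≤ j.val := by
              by_contra hlt
              exact hiT (hj.mpr (by omega))
            have hm5 : some (i, (5:Fin 7)) ∈ R :=
              (hmemS i 5).mpr (iff_of_false hiT (by decide))
            have r5 : ((SimpleGraph.fromRel (x3cRel m)).induce (R : Set _)).Reachable
                ⟨some (i, (5:Fin 7)), hm5⟩ ⟨none, hnone⟩ :=
              (induce_reach hnone hm5 (x3c_adj_root5 i)).symm
            rcases Nat.lt_or_ge j.val 6 with h6 | h6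
            · obtain rfl : j = (5 : Fin 7) := Fin.ext (by have h5 : (5:Fin 7).val = 5 := rfl; omega)
              exact r5
            · obtain rfl : j = (6 : Fin 7) := Fin.ext
                (by have h5 : (6:Fin 7).val = 6 := rfl; have := j.isLt; omega)
              exact (induce_reach (Finset.mem_coe.mp hv) hm5 (x3c_adj_56 i).symm).trans r5
      intro u v
      exact (key u).trans (key v).symm
    · -- multiset of colors
      have hcinj : ∀ a ∈ R.val, ∀ b ∈ R.val, x3cColor m q x a = x3cColor m q x b → a = b := by
        intro a ha b hb hab
        rw [← Finset.mem_def] at ha hb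
        rcases x3c_color_cases x a with ⟨rfl, h1⟩ | ⟨i, ⟨hv1, h1⟩ | ⟨hv1, h1⟩ | ⟨j, hv1, h1⟩⟩ <;>
            rcases x3c_color_cases x b with ⟨rfl, h2⟩ | ⟨i', ⟨hv2, h2⟩ | ⟨hv2, h2⟩ | ⟨j', hv2, h2⟩⟩
        · rfl
        · exact absurd (h1.symm.trans (hab.trans h2)) (by have := i'.isLt; omega)
        · exact absurd (h1.symm.trans (hab.trans h2)) (by have := i'.isLt; omega)
        · exact absurd (h1.symm.trans (hab.trans h2)) (by have := (x i' j').isLt; omega)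
        · exact absurd (h1.symm.trans (hab.trans h2)) (by have := i.isLt; omega)
        · have e := h1.symm.trans (hab.trans h2)
          have hii : i = i' := Fin.ext (by omega)
          subst hii
          rcases hv1 with rfl | rfl <;> rcases hv2 with rfl | rfl
          · rfl
          · exact absurd (hT0 i ha) (hT5 i hb)
          · exact absurd (hT0 i hb) (hT5 i ha)
          · rfl
        · exact absurd (h1.symm.trans (hab.trans h2)) (by have := i.isLt; have := i'.isLt; omega)
        · exact absurd (h1.symm.trans (hab.trans h2)) (by have := i.isLt; have := (x i' j').isLt; omega)
        · exact absurd (h1.symm.trans (hab.trans h2)) (by have := i.isLt; omega)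
        · exact absurd (h1.symm.trans (hab.trans h2)) (by have := i.isLt; have := i'.isLt; omega)
        · have e := h1.symm.trans (hab.trans h2)
          have hii : i = i' := Fin.ext (by omega)
          subst hii
          rcases hv1 with rfl | rfl <;> rcases hv2 with rfl | rfl
          · rfl
          · exact absurd (hT4 i ha) (hT6 i hb)
          · exact absurd (hT4 i hb) (hT6 i ha)
          · rfl
        · exact absurd (h1.symm.trans (hab.trans h2)) (by have := i.isLt; have := (x i' j').isLt; omega)
        · exact absurd (h1.symm.trans (hab.trans h2)) (by have := (x i j).isLt; omega)
        · exact absurd (h1.symm.trans (hab.trans h2)) (by have := i'.isLt; have := (x i j).isLt; omega)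
        · exact absurd (h1.symm.trans (hab.trans h2)) (by have := i'.isLt; have := (x i j).isLt; omega)
        · have e := h1.symm.trans (hab.trans h2)
          subst hv1; subst hv2
          have hxx : x i j = x i' j' := Fin.ext (by omega)
          obtain ⟨u, -, hu⟩ := hT (x i j)
          have h1' := hu i ⟨hTe i j ha, j, rfl⟩
          have h2' := hu i' ⟨hTe i' j' hb, j', hxx.symm⟩
          obtain rfl : i = i' := h1'.trans h2'.symm
          obtain rfl : j = j' := hx i hxx
          rfl
      refine (Multiset.Nodup.ext (Multiset.Nodup.map_on hcinj R.nodup)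
        ((Multiset.nodup_range _).map (fun a b h => by omega))).mpr ?_
      intro k
      simp only [Multiset.mem_map, Multiset.mem_range]
      constructor
      · rintro ⟨v, hv, rfl⟩
        rcases x3c_color_cases x v with ⟨rfl, h⟩ | ⟨i, ⟨hv', h⟩ | ⟨hv', h⟩ | ⟨j, rfl, h⟩⟩
        · exact ⟨2*m+3*q, by omega, h.symm⟩
        · exact ⟨i.val, by have := i.isLt; omega, h.symm⟩
        · exact ⟨m+i.val, by have := i.isLt; omega, h.symm⟩
        · exact ⟨2*m+(x i j).val, by have := (x i j).isLt; omega, h.symm⟩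
      · rintro ⟨k, hk, rfl⟩
        rcases Nat.lt_or_ge k m with hk1 | hk1
        · by_cases hiT : (⟨k, hk1⟩ : Fin m) ∈ T
          · exact ⟨some (⟨k,hk1⟩, (0:Fin 7)),
              Finset.mem_def.mp ((hmemS _ _).mpr (iff_of_true hiT (by decide))), rfl⟩
          · exact ⟨some (⟨k,hk1⟩, (5:Fin 7)),
              Finset.mem_def.mp ((hmemS _ _).mpr (iff_of_false hiT (by decide))), rfl⟩
        · rcases Nat.lt_or_ge k (2*m) with hk2 | hk2
          · by_cases hiT : (⟨k-m, by omega⟩ : Fin m) ∈ T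
            · exact ⟨some (⟨k-m, by omega⟩, (4:Fin 7)),
                Finset.mem_def.mp ((hmemS _ _).mpr (iff_of_true hiT (by decide))),
                by show m + (k-m) + 1 = k+1; omega⟩
            · exact ⟨some (⟨k-m, by omega⟩, (6:Fin 7)),
                Finset.mem_def.mp ((hmemS _ _).mpr (iff_of_false hiT (by decide))),
                by show m + (k-m) + 1 = k+1; omega⟩
          · rcases Nat.lt_or_ge k (2*m+3*q) with hk3 | hk3
            · obtain ⟨i, ⟨hiT, j, hj⟩, -⟩ := hT ⟨k-2*m, by omega⟩
              refine ⟨some (i, ⟨j.val+1, by omega⟩),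
                Finset.mem_def.mp ((hmemS _ _).mpr (iff_of_true hiT
                  (by have := j.isLt; show j.val+1 ≤ 4; omega))), ?_⟩
              rw [x3c_color_e, hj]
              show 2*m + (k - 2*m) + 1 = k+1
              omega
            · exact ⟨none, Finset.mem_def.mp hnone, by show 2*m+3*q+1 = k+1; omega⟩
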